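/- Let n = 2 and let V₁, V₂ be an admissible family on H = ℓ²(ℕ²; ℂ), with S := ran V₁ + ran V₂ and K₁₂ := P_S S₁* S₂ P_S − P_S S₂ P_S S₁* P_S the implementation of the cross-commutator [R₁*, R₂] of the restrictions Rᵢ = Sᵢ|_S. Then K₁₂ has rank at most one (in particular it is compact and Hilbert–Schmidt), and its operator norm — which coincides with its Hilbert–Schmidt norm since the rank is at most one — equals (1 − |⟨V₁ e₀, e₀⟩|²)^{1/2} · (1 − |⟨V₂ e₀, e₀⟩|²)^{1/2}. -/

import Mathlib

open ContinuousLinearMap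

noncomputable section

/-- `ℓ²(ℕⁿ; ℂ)`, identified with the Hardy space `H²(𝔻ⁿ)` via Taylor coefficients. -/
abbrev HardyH (n : ℕ) : Type := lp (fun _ : Fin n → ℕ => ℂ) 2

/-- `T` is the `i`-th coordinate unilateral shift (multiplication by `zᵢ` on `H²(𝔻ⁿ)`):
`(T f) α = f (α − εᵢ)` if `αᵢ ≥ 1`, and `0` otherwise. -/
def IsShift (n : ℕ) (i : Fin n) (T : HardyH n →L[ℂ] HardyH n) : Prop :=
  ∀ (f : HardyH n) (α : Fin n → ℕ),
    T f α = if 0 < α i then f (α - Pi.single i 1) else 0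

/-- The standard basis vector at the zero multi-index (the constant function `1`). -/
def e₀ (n : ℕ) : HardyH n := lp.single 2 0 1

/-- `V` is a variable-`i` inner multiplier: an isometry commuting with every shift and
with the adjoints of the shifts in all the other variables (these are exactly the
multiplication operators by one-variable inner functions `Θ(zᵢ)`). -/
def IsInnerMult (n : ℕ) (i : Fin n) (Sh : Fin n → HardyH n →L[ℂ] HardyH n)
    (V : HardyH n →L[ℂ] HardyH n) : Prop :=
  adjoint V * V = 1 ∧ (∀ j, V * Sh j = Sh j * V) ∧
    ∀ j, j ≠ i → V * adjoint (Sh j) = adjoint (Sh j) * V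

/-- An admissible family: `Sh` are the coordinate shifts, each `V i` is a variable-`i`
inner multiplier, and the `V i` doubly commute with each other. -/
def IsAdmissible {n : ℕ} (Sh V : Fin n → HardyH n →L[ℂ] HardyH n) : Prop :=
  (∀ i, IsShift n i (Sh i)) ∧ (∀ i, IsInnerMult n i Sh (V i)) ∧
  (∀ i j, i ≠ j → V i * V j = V j * V i) ∧
  (∀ i j, i ≠ j → adjoint (V i) * V j = V j * adjoint (V i))

namespace Aux

variable {n : ℕ}

local notation "⟪" x ", " y "⟫" => @inner ℂ _ _ x y

lemma addsub (i : Fin n) (α : Fin n → ℕ) :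
    α + Pi.single i 1 - Pi.single i 1 = α := by
  funext j
  by_cases hj : j = i
  · subst hj; simp
  · simp [Pi.sub_apply, Pi.add_apply, Pi.single_eq_of_ne hj]

lemma add_single_apply_self (i : Fin n) (α : Fin n → ℕ) :
    (α + Pi.single i 1 : Fin n → ℕ) i = α i + 1 := by simp

lemma subadd {i : Fin n} {α : Fin n → ℕ} (h : 0 < α i) :
    α - Pi.single i 1 + Pi.single i 1 = α := by
  funext j
  by_cases hj : j = i
  · subst hj; simp only [Pi.add_apply, Pi.sub_apply, Pi.single_eq_same]; omega
  · simp [Pi.sub_apply, Pi.add_apply, Pi.single_eq_of_ne hj]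

lemma coord (h : HardyH n) (α : Fin n → ℕ) :
    ⟪lp.single 2 α (1:ℂ), h⟫ = h α := by
  rw [lp.inner_single_left]
  simp [RCLike.inner_apply]

lemma coord0 (h : HardyH n) : ⟪e₀ n, h⟫ = h 0 := coord h 0

lemma shift_single {i : Fin n} {T : HardyH n →L[ℂ] HardyH n} (hT : IsShift n i T)
    (α : Fin n → ℕ) :
    T (lp.single 2 α (1:ℂ)) = lp.single 2 (α + Pi.single i 1) (1:ℂ) := by
  apply lp.ext
  funext β
  rw [hT _ β]
  by_cases hb : 0 < β i
  · rw [if_pos hb]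
    by_cases he : β = α + Pi.single i 1
    · subst he
      rw [addsub, lp.single_apply_self, lp.single_apply_self]
    · have h2 : β - Pi.single i 1 ≠ α := by
        intro h3
        apply he
        rw [← h3, subadd hb]
      rw [lp.single_apply_ne _ _ _ h2, lp.single_apply_ne _ _ _ he]
  · rw [if_neg hb]
    have h2 : β ≠ α + Pi.single i 1 := by
      intro h3
      apply hb
      rw [h3, add_single_apply_self]
      omega
    rw [lp.single_apply_ne _ _ _ h2]

lemma adj_shift_apply {i : Fin n} {T : HardyH n →L[ℂ] HardyH n} (hT : IsShift n i T)
    (h : HardyH n) (α : Fin n → ℕ) :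
    adjoint T h α = h (α + Pi.single i 1) := by
  rw [← coord (adjoint T h) α, adjoint_inner_right, shift_single hT, coord]

lemma shift_isometry {i : Fin n} {T : HardyH n →L[ℂ] HardyH n} (hT : IsShift n i T) :
    adjoint T * T = 1 := by
  ext f α
  rw [ContinuousLinearMap.mul_apply, adj_shift_apply hT, hT _ _, if_pos (by simp), addsub, ContinuousLinearMap.one_apply]

lemma shifts_commute {i j : Fin n} (hij : i ≠ j) {T U : HardyH n →L[ℂ] HardyH n}
    (hT : IsShift n i T) (hU : IsShift n j U) : T * U = U * T := by
  ext f α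
  rw [ContinuousLinearMap.mul_apply, ContinuousLinearMap.mul_apply, hT _ _, hU _ _]
  have hji : (α - Pi.single i 1 : Fin n → ℕ) j = α j := by
    simp [Pi.sub_apply, Pi.single_eq_of_ne (Ne.symm hij)]
  have hij' : (α - Pi.single j 1 : Fin n → ℕ) i = α i := by
    simp [Pi.sub_apply, Pi.single_eq_of_ne hij]
  by_cases h1 : 0 < α i
  · rw [if_pos h1]
    rw [hU _ _, hT _ _, hji, hij']
    by_cases h2 : 0 < α j
    · rw [if_pos h2, if_pos h2, if_pos h1]
      have harg : α - Pi.single i 1 - Pi.single j 1 = α - Pi.single j 1 - Pi.single i 1 := by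
        funext k
        simp only [Pi.sub_apply]
        omega
      rw [harg]
    · rw [if_neg h2, if_neg h2]
  · rw [if_neg h1, hU _ _, hT _ _, hij']
    rw [if_neg h1]
    by_cases h2 : 0 < α j
    · rw [if_pos h2]
    · rw [if_neg h2]

lemma adj_shift_commute {i j : Fin n} (hij : i ≠ j) {T U : HardyH n →L[ℂ] HardyH n}
    (hT : IsShift n i T) (hU : IsShift n j U) : adjoint T * U = U * adjoint T := by
  ext f α
  rw [ContinuousLinearMap.mul_apply, ContinuousLinearMap.mul_apply, adj_shift_apply hT, hU _ _, hU _ _]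
  have hji : (α + Pi.single i 1 : Fin n → ℕ) j = α j := by
    simp [Pi.add_apply, Pi.single_eq_of_ne (Ne.symm hij)]
  rw [hji]
  by_cases h2 : 0 < α j
  · rw [if_pos h2, if_pos h2, adj_shift_apply hT]
    have harg : α + Pi.single i 1 - Pi.single j 1 = α - Pi.single j 1 + Pi.single i 1 := by
      funext k
      simp only [Pi.sub_apply, Pi.add_apply]
      rcases eq_or_ne k i with rfl | hk
      · simp only [Pi.single_eq_same, Pi.single_eq_of_ne hij]; omega
      · rcases eq_or_ne k j with rfl | hk2
        · simp only [Pi.single_eq_of_ne (Ne.symm hij), Pi.single_eq_same]; omega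
        · simp [Pi.single_eq_of_ne hk, Pi.single_eq_of_ne hk2]
    rw [harg]
  · rw [if_neg h2, if_neg h2]

lemma adj_shift_e₀ {i : Fin n} {T : HardyH n →L[ℂ] HardyH n} (hT : IsShift n i T) :
    adjoint T (e₀ n) = 0 := by
  apply lp.ext
  funext α
  rw [adj_shift_apply hT]
  have : (α + Pi.single i 1 : Fin n → ℕ) ≠ 0 := by
    intro h
    have := congrFun h i
    simp at this
  unfold e₀
  rw [lp.single_apply_ne _ _ _ this]
  simp

lemma defect_apply {i : Fin n} {T : HardyH n →L[ℂ] HardyH n} (hT : IsShift n i T)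
    (h : HardyH n) (α : Fin n → ℕ) :
    ((1 - T * adjoint T) h) α = if 0 < α i then 0 else h α := by
  have : ((1 - T * adjoint T) h) = h - T (adjoint T h) := by
    simp [sub_apply, ContinuousLinearMap.mul_apply]
  rw [this, lp.coeFn_sub, Pi.sub_apply, hT _ _]
  by_cases h1 : 0 < α i
  · rw [if_pos h1, if_pos h1, adj_shift_apply hT, subadd h1, sub_self]
  · rw [if_neg h1, if_neg h1, sub_zero]

lemma defect_two {T U : HardyH 2 →L[ℂ] HardyH 2} (hT : IsShift 2 0 T)
    (hU : IsShift 2 1 U) (h : HardyH 2) :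
    (1 - T * adjoint T) ((1 - U * adjoint U) h) = h 0 • e₀ 2 := by
  apply lp.ext
  funext α
  rw [defect_apply hT, lp.coeFn_smul, Pi.smul_apply, smul_eq_mul]
  by_cases h0 : 0 < α 0
  · rw [if_pos h0]
    have : α ≠ 0 := by intro h'; rw [h'] at h0; simp at h0
    unfold e₀
    rw [lp.single_apply_ne _ _ _ this, mul_zero]
  · rw [if_neg h0, defect_apply hU]
    by_cases h1 : 0 < α 1
    · rw [if_pos h1]
      have : α ≠ 0 := by intro h'; rw [h'] at h1; simp at h1
      unfold e₀
      rw [lp.single_apply_ne _ _ _ this, mul_zero]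
    · rw [if_neg h1]
      have : α = 0 := by
        funext k
        fin_cases k <;> simp <;> omega
      subst this
      unfold e₀
      rw [lp.single_apply_self, mul_one]

lemma appc {A B : HardyH n →L[ℂ] HardyH n} (h : A * B = B * A) (z : HardyH n) :
    A (B z) = B (A z) := by
  rw [← ContinuousLinearMap.mul_apply, h, ContinuousLinearMap.mul_apply]

lemma app1 {A B : HardyH n →L[ℂ] HardyH n} (h : A * B = 1) (z : HardyH n) :
    A (B z) = z := by
  rw [← ContinuousLinearMap.mul_apply, h, ContinuousLinearMap.one_apply]

lemma appe {A B C : HardyH n →L[ℂ] HardyH n} (h : A * B = C) (z : HardyH n) :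
    A (B z) = C z := by
  rw [← ContinuousLinearMap.mul_apply, h]

lemma adj_comm {A B : HardyH n →L[ℂ] HardyH n} (h : A * B = B * A) :
    adjoint A * adjoint B = adjoint B * adjoint A := by
  have h2 := congrArg star h
  simp only [star_mul, star_eq_adjoint] at h2
  exact h2.symm

lemma adj_comm' {A B : HardyH n →L[ℂ] HardyH n} (h : A * adjoint B = adjoint B * A) :
    adjoint A * B = B * adjoint A := by
  have h2 := congrArg star h
  simp only [star_mul, star_eq_adjoint, adjoint_adjoint] at h2
  exact h2.symm

end Aux

open Aux

set_option maxHeartbeats 3000000 in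
/-- For `n = 2` and an admissible family `V₁, V₂` with associated
submodule `S = ran V₁ + ran V₂` (projection `P`), the cross-commutator
`K₁₂ = P S₁* S₂ P − P S₂ P S₁* P` has rank at most one (in particular it is compact), and
its operator norm equals `(1 − |⟨V₁e₀, e₀⟩|²)^{1/2} (1 − |⟨V₂e₀, e₀⟩|²)^{1/2}`. -/
theorem cross_commutator_bidisc_rank_one_and_norm
    (Sh V : Fin 2 → HardyH 2 →L[ℂ] HardyH 2)
    (hadm : IsAdmissible Sh V)
    (P : HardyH 2 →L[ℂ] HardyH 2)
    (hPsa : IsSelfAdjoint P) (hPid : P * P = P)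
    (hPr : LinearMap.range (P : HardyH 2 →ₗ[ℂ] HardyH 2) = ∑ i, LinearMap.range (V i : HardyH 2 →ₗ[ℂ] HardyH 2)) :
    Module.rank ℂ
      ↥(LinearMap.range
        ((P * adjoint (Sh 0) * Sh 1 * P - P * Sh 1 * P * adjoint (Sh 0) * P :
          HardyH 2 →L[ℂ] HardyH 2) : HardyH 2 →ₗ[ℂ] HardyH 2)) ≤ 1 ∧
    IsCompactOperator
      ⇑(P * adjoint (Sh 0) * Sh 1 * P - P * Sh 1 * P * adjoint (Sh 0) * P) ∧
    ‖P * adjoint (Sh 0) * Sh 1 * P - P * Sh 1 * P * adjoint (Sh 0) * P‖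
      = Real.sqrt (1 - ‖(inner ℂ (e₀ 2) (V 0 (e₀ 2)) : ℂ)‖ ^ 2)
        * Real.sqrt (1 - ‖(inner ℂ (e₀ 2) (V 1 (e₀ 2)) : ℂ)‖ ^ 2) := by
  classical
  obtain ⟨hSh, hIM, hVV, hWV⟩ := hadm
  obtain ⟨hw1v1, hv1s, hv1t⟩ := hIM 0
  obtain ⟨hw2v2, hv2s, hv2t⟩ := hIM 1
  have h01 : (0 : Fin 2) ≠ 1 := by decide
  have h10 : (1 : Fin 2) ≠ 0 := by decide
  have hS0 := hSh 0
  have hS1 := hSh 1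
  set s1 := Sh 0 with hs1def
  set s2 := Sh 1 with hs2def
  set v1 := V 0 with hv1def
  set v2 := V 1 with hv2def
  -- operator relations
  have ht1s1 : adjoint s1 * s1 = 1 := shift_isometry hS0
  have ht2s2 : adjoint s2 * s2 = 1 := shift_isometry hS1
  have hs1s2 : s1 * s2 = s2 * s1 := shifts_commute h01 hS0 hS1
  have ht1s2 : adjoint s1 * s2 = s2 * adjoint s1 := adj_shift_commute h01 hS0 hS1
  have ht2s1 : adjoint s2 * s1 = s1 * adjoint s2 := adj_shift_commute h10 hS1 hS0
  have ht1t2 : adjoint s1 * adjoint s2 = adjoint s2 * adjoint s1 := adj_comm hs1s2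
  have hv1s1 : v1 * s1 = s1 * v1 := hv1s 0
  have hv1s2 : v1 * s2 = s2 * v1 := hv1s 1
  have hv2s1 : v2 * s1 = s1 * v2 := hv2s 0
  have hv2s2 : v2 * s2 = s2 * v2 := hv2s 1
  have hv1t2 : v1 * adjoint s2 = adjoint s2 * v1 := hv1t 1 h10
  have hv2t1 : v2 * adjoint s1 = adjoint s1 * v2 := hv2t 0 h01
  have hw1t1 : adjoint v1 * adjoint s1 = adjoint s1 * adjoint v1 := adj_comm hv1s1
  have hw1t2 : adjoint v1 * adjoint s2 = adjoint s2 * adjoint v1 := adj_comm hv1s2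
  have hw2t1 : adjoint v2 * adjoint s1 = adjoint s1 * adjoint v2 := adj_comm hv2s1
  have hw2t2 : adjoint v2 * adjoint s2 = adjoint s2 * adjoint v2 := adj_comm hv2s2
  have hw1s2 : adjoint v1 * s2 = s2 * adjoint v1 := adj_comm' hv1t2
  have hw2s1 : adjoint v2 * s1 = s1 * adjoint v2 := adj_comm' hv2t1
  have hv1v2 : v1 * v2 = v2 * v1 := hVV 0 1 h01
  have hw1v2 : adjoint v1 * v2 = v2 * adjoint v1 := hWV 0 1 h01
  have hw2v1 : adjoint v2 * v1 = v1 * adjoint v2 := hWV 1 0 h10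
  have hw1w2 : adjoint v1 * adjoint v2 = adjoint v2 * adjoint v1 := adj_comm hv1v2
  -- P = p1 + p2 - p1 p2
  have hp1p2 : (v1 * adjoint v1) * (v2 * adjoint v2) = (v2 * adjoint v2) * (v1 * adjoint v1) := by
    ext f α
    simp only [ContinuousLinearMap.mul_apply, appc hw1v2, appc hv1v2, appc hw1w2, appc hw2v1.symm]
  have hQv1 : (v1 * adjoint v1 + v2 * adjoint v2 - (v1 * adjoint v1) * (v2 * adjoint v2)) * v1
      = v1 := by
    apply ContinuousLinearMap.ext; intro f
    simp only [ContinuousLinearMap.mul_apply, add_apply, sub_apply, app1 hw1v1, appc hw1v2, appc hv1v2,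
      appc hw1w2, appc hw2v1.symm]
    abel
  have hQv2 : (v1 * adjoint v1 + v2 * adjoint v2 - (v1 * adjoint v1) * (v2 * adjoint v2)) * v2
      = v2 := by
    apply ContinuousLinearMap.ext; intro f
    simp only [ContinuousLinearMap.mul_apply, add_apply, sub_apply, app1 hw2v2, appc hw1v2, appc hv1v2,
      appc hw1w2, appc hw2v1.symm]
    abel
  have hQP : (v1 * adjoint v1 + v2 * adjoint v2 - (v1 * adjoint v1) * (v2 * adjoint v2)) * P
      = P := by
    apply ContinuousLinearMap.ext; intro f
    rw [ContinuousLinearMap.mul_apply]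
    have hmem : P f ∈ LinearMap.range (P : HardyH 2 →ₗ[ℂ] HardyH 2) := ⟨f, rfl⟩
    rw [hPr, Fin.sum_univ_two, Submodule.add_eq_sup] at hmem
    obtain ⟨a, ha, b, hb, heq⟩ := Submodule.mem_sup.1 hmem
    obtain ⟨fa, rfl⟩ := ha
    obtain ⟨fb, rfl⟩ := hb
    rw [← heq, map_add]
    exact congrArg₂ (· + ·) (appe hQv1 fa) (appe hQv2 fb)
  have hPQ : P * (v1 * adjoint v1 + v2 * adjoint v2 - (v1 * adjoint v1) * (v2 * adjoint v2))
      = (v1 * adjoint v1 + v2 * adjoint v2 - (v1 * adjoint v1) * (v2 * adjoint v2)) := by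
    apply ContinuousLinearMap.ext; intro f
    rw [ContinuousLinearMap.mul_apply]
    have hval : (v1 * adjoint v1 + v2 * adjoint v2 - (v1 * adjoint v1) * (v2 * adjoint v2)) f
        = v1 (adjoint v1 f - adjoint v1 (v2 (adjoint v2 f))) + v2 (adjoint v2 f) := by
      simp only [add_apply, sub_apply, ContinuousLinearMap.mul_apply, map_sub]
      abel
    have hmem : (v1 * adjoint v1 + v2 * adjoint v2
        - (v1 * adjoint v1) * (v2 * adjoint v2)) f ∈ LinearMap.range (P : HardyH 2 →ₗ[ℂ] HardyH 2) := by
      rw [hPr, Fin.sum_univ_two, Submodule.add_eq_sup]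
      exact Submodule.mem_sup.2 ⟨_, ⟨_, rfl⟩, _, ⟨_, rfl⟩, hval.symm⟩
    obtain ⟨g, hg⟩ := hmem
    rw [← hg]
    exact appe hPid g
  have hQstar : star (v1 * adjoint v1 + v2 * adjoint v2
      - (v1 * adjoint v1) * (v2 * adjoint v2))
      = v1 * adjoint v1 + v2 * adjoint v2 - (v1 * adjoint v1) * (v2 * adjoint v2) := by
    simp only [star_sub, star_add, star_mul, star_eq_adjoint, adjoint_adjoint]
    rw [← hp1p2]
  have hP : P = v1 * adjoint v1 + v2 * adjoint v2 - (v1 * adjoint v1) * (v2 * adjoint v2) := by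
    calc P = star P := hPsa.star_eq.symm
    _ = star ((v1 * adjoint v1 + v2 * adjoint v2
        - (v1 * adjoint v1) * (v2 * adjoint v2)) * P) := by rw [hQP]
    _ = star P * star (v1 * adjoint v1 + v2 * adjoint v2
        - (v1 * adjoint v1) * (v2 * adjoint v2)) := by rw [star_mul]
    _ = P * (v1 * adjoint v1 + v2 * adjoint v2
        - (v1 * adjoint v1) * (v2 * adjoint v2)) := by rw [hPsa.star_eq, hQstar]
    _ = _ := hPQ
  -- main operator identity
  have hKop : P * adjoint s1 * s2 * P - P * s2 * P * adjoint s1 * P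
      = v2 * (adjoint s1 * (v1 * ((1 - s1 * adjoint s1) *
          ((1 - s2 * adjoint s2) * (adjoint v2 * (s2 * adjoint v1)))))) := by
    rw [hP]
    apply ContinuousLinearMap.ext; intro f
    simp only [ContinuousLinearMap.mul_apply, add_apply, sub_apply, ContinuousLinearMap.one_apply, map_add, map_sub,
      app1 ht1s1, app1 hw1v1, app1 ht2s2, app1 hw2v2,
      appc hv1s1, appc hw1t1,
      appc hv2s2.symm, appc hw2t2.symm,
      appc hs1s2, appc ht2s1.symm, appc hv2s1.symm, appc hw2s1.symm,
      appc ht1s2, appc ht1t2, appc hv2t1.symm, appc hw2t1.symm,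
      appc hv1s2, appc hv1t2, appc hv1v2, appc hw2v1.symm,
      appc hw1s2, appc hw1t2, appc hw1v2, appc hw1w2]
    abel
  -- rank one form
  have hKf : ∀ f, (P * adjoint s1 * s2 * P - P * s2 * P * adjoint s1 * P) f
      = (inner ℂ (v1 (adjoint s2 (v2 (e₀ 2)))) f : ℂ)
          • (v2 (adjoint s1 (v1 (e₀ 2)))) := by
    intro f
    rw [hKop]
    simp only [ContinuousLinearMap.mul_apply]
    rw [defect_two hS0 hS1, map_smul, map_smul, map_smul]
    congr 1
    rw [← coord0 (adjoint v2 (s2 (adjoint v1 f))), adjoint_inner_right,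
      ← adjoint_inner_left, adjoint_inner_right]
  set x := v2 (adjoint s1 (v1 (e₀ 2))) with hxdef
  set y := v1 (adjoint s2 (v2 (e₀ 2))) with hydef
  -- isometries preserve norms
  have hiso : ∀ (W : HardyH 2 →L[ℂ] HardyH 2), adjoint W * W = 1 →
      ∀ u, ‖W u‖ = ‖u‖ := by
    intro W hW u
    have h1 : (inner ℂ (W u) (W u) : ℂ) = inner ℂ u u := by
      rw [← adjoint_inner_left, app1 hW u]
    have h3 : ‖W u‖ ^ 2 = ‖u‖ ^ 2 := by
      rw [← inner_self_eq_norm_sq (𝕜 := ℂ), ← inner_self_eq_norm_sq (𝕜 := ℂ), h1]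
    rw [← Real.sqrt_sq (norm_nonneg (W u)), h3, Real.sqrt_sq (norm_nonneg u)]
  have he₀norm : ‖e₀ 2‖ = 1 := by
    have h2 : (0:ENNReal) < 2 := by norm_num
    have := lp.norm_single (E := fun _ : Fin 2 → ℕ => ℂ) h2 0 (1:ℂ)
    simpa [e₀] using this
  -- norm of x
  have hxn : ‖x‖ ^ 2 = 1 - ‖(inner ℂ (e₀ 2) (v1 (e₀ 2)) : ℂ)‖ ^ 2 := by
    have hu2z : adjoint s2 (v1 (e₀ 2)) = 0 := by
      rw [appc hv1t2.symm, adj_shift_e₀ hS1, map_zero]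
    have hD2u : (1 - s2 * adjoint s2) (v1 (e₀ 2)) = v1 (e₀ 2) := by
      simp only [sub_apply, ContinuousLinearMap.one_apply, ContinuousLinearMap.mul_apply, hu2z, map_zero, sub_zero]
    have hD1u : v1 (e₀ 2) - s1 (adjoint s1 (v1 (e₀ 2)))
        = (v1 (e₀ 2)) 0 • e₀ 2 := by
      have h5 := defect_two hS0 hS1 (v1 (e₀ 2))
      rw [hD2u] at h5
      simpa [sub_apply, ContinuousLinearMap.one_apply, ContinuousLinearMap.mul_apply] using h5
    have hs1t1u : s1 (adjoint s1 (v1 (e₀ 2)))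
        = v1 (e₀ 2) - (v1 (e₀ 2)) 0 • e₀ 2 := by
      rw [← hD1u]; abel
    have hc : (inner ℂ (v1 (e₀ 2)) (e₀ 2) : ℂ) = (starRingEnd ℂ) ((v1 (e₀ 2)) 0) := by
      rw [← inner_conj_symm, coord0]
    have hxval : (inner ℂ (adjoint s1 (v1 (e₀ 2))) (adjoint s1 (v1 (e₀ 2))) : ℂ)
        = inner ℂ (v1 (e₀ 2)) (v1 (e₀ 2))
          - ((v1 (e₀ 2)) 0 * (starRingEnd ℂ) ((v1 (e₀ 2)) 0) : ℂ) := by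
      rw [adjoint_inner_left, hs1t1u, inner_sub_right, inner_smul_right, hc]
    have hcoordu : (v1 (e₀ 2)) 0 = (inner ℂ (e₀ 2) (v1 (e₀ 2)) : ℂ) := (coord0 _).symm
    have hx1 : ‖x‖ = ‖adjoint s1 (v1 (e₀ 2))‖ := hiso v2 hw2v2 _
    have hu1 : ‖v1 (e₀ 2)‖ = 1 := by rw [hiso v1 hw1v1 _, he₀norm]
    have h6 : RCLike.re (inner ℂ (adjoint s1 (v1 (e₀ 2))) (adjoint s1 (v1 (e₀ 2))) : ℂ)
        = RCLike.re ((inner ℂ (v1 (e₀ 2)) (v1 (e₀ 2)) : ℂ)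
          - ((v1 (e₀ 2)) 0 * (starRingEnd ℂ) ((v1 (e₀ 2)) 0) : ℂ)) := by rw [hxval]
    rw [inner_self_eq_norm_sq, map_sub, inner_self_eq_norm_sq, RCLike.mul_conj,
      ← RCLike.ofReal_pow, RCLike.ofReal_re] at h6
    rw [hx1, h6, hu1, hcoordu]
    norm_num
  -- norm of y
  have hyn : ‖y‖ ^ 2 = 1 - ‖(inner ℂ (e₀ 2) (v2 (e₀ 2)) : ℂ)‖ ^ 2 := by
    have hu1z : adjoint s1 (v2 (e₀ 2)) = 0 := by
      rw [appc hv2t1.symm, adj_shift_e₀ hS0, map_zero]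
    have ht1D2 : adjoint s1 (v2 (e₀ 2) - s2 (adjoint s2 (v2 (e₀ 2)))) = 0 := by
      simp only [map_sub, hu1z, appc ht1s2, appc ht1t2, map_zero, sub_zero,
        zero_sub, neg_zero]
    have hD2u : (1 - s1 * adjoint s1) ((1 - s2 * adjoint s2) (v2 (e₀ 2)))
        = (1 - s2 * adjoint s2) (v2 (e₀ 2)) := by
      simp only [sub_apply, ContinuousLinearMap.one_apply, ContinuousLinearMap.mul_apply, ht1D2, map_zero, sub_zero]
    have hD1u : v2 (e₀ 2) - s2 (adjoint s2 (v2 (e₀ 2)))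
        = (v2 (e₀ 2)) 0 • e₀ 2 := by
      have h5 := defect_two hS0 hS1 (v2 (e₀ 2))
      rw [hD2u] at h5
      simpa [sub_apply, ContinuousLinearMap.one_apply, ContinuousLinearMap.mul_apply] using h5
    have hs2t2u : s2 (adjoint s2 (v2 (e₀ 2)))
        = v2 (e₀ 2) - (v2 (e₀ 2)) 0 • e₀ 2 := by
      rw [← hD1u]; abel
    have hc : (inner ℂ (v2 (e₀ 2)) (e₀ 2) : ℂ) = (starRingEnd ℂ) ((v2 (e₀ 2)) 0) := by
      rw [← inner_conj_symm, coord0]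
    have hyval : (inner ℂ (adjoint s2 (v2 (e₀ 2))) (adjoint s2 (v2 (e₀ 2))) : ℂ)
        = inner ℂ (v2 (e₀ 2)) (v2 (e₀ 2))
          - ((v2 (e₀ 2)) 0 * (starRingEnd ℂ) ((v2 (e₀ 2)) 0) : ℂ) := by
      rw [adjoint_inner_left, hs2t2u, inner_sub_right, inner_smul_right, hc]
    have hcoordu : (v2 (e₀ 2)) 0 = (inner ℂ (e₀ 2) (v2 (e₀ 2)) : ℂ) := (coord0 _).symm
    have hy1 : ‖y‖ = ‖adjoint s2 (v2 (e₀ 2))‖ := hiso v1 hw1v1 _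
    have hu1 : ‖v2 (e₀ 2)‖ = 1 := by rw [hiso v2 hw2v2 _, he₀norm]
    have h6 : RCLike.re (inner ℂ (adjoint s2 (v2 (e₀ 2))) (adjoint s2 (v2 (e₀ 2))) : ℂ)
        = RCLike.re ((inner ℂ (v2 (e₀ 2)) (v2 (e₀ 2)) : ℂ)
          - ((v2 (e₀ 2)) 0 * (starRingEnd ℂ) ((v2 (e₀ 2)) 0) : ℂ)) := by rw [hyval]
    rw [inner_self_eq_norm_sq, map_sub, inner_self_eq_norm_sq, RCLike.mul_conj,
      ← RCLike.ofReal_pow, RCLike.ofReal_re] at h6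
    rw [hy1, h6, hu1, hcoordu]
    norm_num
  -- norm of the operator
  have hKnorm : ‖P * adjoint s1 * s2 * P - P * s2 * P * adjoint s1 * P‖ = ‖x‖ * ‖y‖ := by
    apply le_antisymm
    · apply opNorm_le_bound _ (mul_nonneg (norm_nonneg x) (norm_nonneg y))
      intro f
      rw [hKf f, norm_smul]
      calc ‖(inner ℂ y f : ℂ)‖ * ‖x‖ ≤ (‖y‖ * ‖f‖) * ‖x‖ :=
            mul_le_mul_of_nonneg_right (norm_inner_le_norm _ _) (norm_nonneg x)
      _ = ‖x‖ * ‖y‖ * ‖f‖ := by ring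
    · by_cases hy0 : y = 0
      · have hK0 : P * adjoint s1 * s2 * P - P * s2 * P * adjoint s1 * P = 0 := by
          apply ContinuousLinearMap.ext; intro f
          rw [hKf f, hy0, inner_zero_left, zero_smul, zero_apply]
        rw [hK0, hy0, norm_zero, norm_zero, mul_zero]
      · have hKy : ‖(P * adjoint s1 * s2 * P - P * s2 * P * adjoint s1 * P) y‖
            = ‖x‖ * ‖y‖ * ‖y‖ := by
          rw [hKf y, norm_smul, inner_self_eq_norm_sq_to_K]
          simp only [norm_pow, RCLike.norm_ofReal, abs_norm]
          ring
        have h2 := (P * adjoint s1 * s2 * P - P * s2 * P * adjoint s1 * P).le_opNorm y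
        rw [hKy] at h2
        have hy' : (0:ℝ) < ‖y‖ := norm_pos_iff.2 hy0
        exact le_of_mul_le_mul_right h2 hy'
  refine ⟨?_, ?_, ?_⟩
  · -- rank at most one
    have hr : LinearMap.range ((P * adjoint s1 * s2 * P - P * s2 * P * adjoint s1 * P :
          HardyH 2 →L[ℂ] HardyH 2) : HardyH 2 →ₗ[ℂ] HardyH 2)
        ≤ Submodule.span ℂ {x} := by
      rintro z ⟨f, rfl⟩
      rw [ContinuousLinearMap.coe_coe, hKf f]
      exact Submodule.smul_mem _ _ (Submodule.mem_span_singleton_self x)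
    exact le_trans (Submodule.rank_mono hr)
      ((rank_span_le _).trans_eq (Cardinal.mk_singleton _))
  · -- compactness
    refine ⟨(fun c : ℂ => c • x) '' Metric.closedBall 0 ‖y‖,
      (isCompact_closedBall 0 ‖y‖).image (continuous_id.smul continuous_const), ?_⟩
    have hsub : Metric.ball (0 : HardyH 2) 1 ⊆
        ⇑(P * adjoint s1 * s2 * P - P * s2 * P * adjoint s1 * P) ⁻¹'
          ((fun c : ℂ => c • x) '' Metric.closedBall 0 ‖y‖) := by
      intro f hf
      refine ⟨(inner ℂ y f : ℂ), ?_, (hKf f).symm⟩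
      rw [Metric.mem_closedBall, dist_zero_right]
      calc ‖(inner ℂ y f : ℂ)‖ ≤ ‖y‖ * ‖f‖ := norm_inner_le_norm _ _
      _ ≤ ‖y‖ * 1 := by
          apply mul_le_mul_of_nonneg_left _ (norm_nonneg y)
          have := Metric.mem_ball.1 hf
          rw [dist_zero_right] at this
          exact this.le
      _ = ‖y‖ := mul_one _
    exact Filter.mem_of_superset (Metric.ball_mem_nhds 0 one_pos) hsub
  · -- norm value
    rw [hKnorm]
    congr 1
    · rw [← Real.sqrt_sq (norm_nonneg x), hxn]
    · rw [← Real.sqrt_sq (norm_nonneg y), hyn]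

end
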